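/- Let y > 0 and a ≤ b be real numbers, and let γ : ℝ → ℍ be the horizontal (horocyclic) path γ(s) = s + y·i in the upper half-plane ℍ = {z ∈ ℂ : Im z > 0} with the hyperbolic distance dist(z, w) = 2·arsinh(|z − w| / (2·√(Im z · Im w))). Then the metric arc length of γ over [a, b], i.e. the total variation of γ on [a, b] (the supremum over finite partitions a = s₀ ≤ s₁ ≤ … ≤ s_m = b of Σ dist(γ(s_{j}), γ(s_{j+1}))), equals (b − a)/y. -/

import Mathlib

/-- The horizontal (horocyclic) path `s ↦ s + y·i` at height `y > 0` in the hyperbolic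
upper half-plane. -/
noncomputable def horoPath (y : ℝ) (hy : 0 < y) (s : ℝ) : UpperHalfPlane :=
  ⟨(s : ℂ) + (y : ℂ) * Complex.I, by simpa using hy⟩

lemma horoPath_dist (y : ℝ) (hy : 0 < y) (s t : ℝ) :
    dist (horoPath y hy s) (horoPath y hy t) = 2 * Real.arsinh (|s - t| / (2 * y)) := by
  rw [UpperHalfPlane.dist_eq]
  have him : ∀ u : ℝ, (horoPath y hy u).im = y := fun u => by
    simp [horoPath, UpperHalfPlane.im]
  have hcd : dist ((horoPath y hy s) : ℂ) ((horoPath y hy t) : ℂ) = |s - t| := by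
    simp only [horoPath, UpperHalfPlane.coe_mk_subtype]
    rw [Complex.dist_eq]
    have : ((s:ℂ) + y * Complex.I) - ((t:ℂ) + y * Complex.I) = ((s - t : ℝ) : ℂ) := by
      push_cast; ring
    rw [this, Complex.norm_real, Real.norm_eq_abs]
  rw [hcd, him, him, Real.sqrt_mul_self hy.le]

lemma arsinh_le_self' {x : ℝ} (hx : 0 ≤ x) : Real.arsinh x ≤ x := by
  rw [← Real.sinh_le_sinh, Real.sinh_arsinh]
  exact Real.self_le_sinh_iff.2 hx

/-- The hyperbolic arc length (total variation) of the horocyclic path `s ↦ s + y·i`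
over `[a, b]` equals `(b - a)/y`. -/
theorem horoPath_length (y a b : ℝ) (hy : 0 < y) (hab : a ≤ b) :
    eVariationOn (horoPath y hy) (Set.Icc a b) = ENNReal.ofReal ((b - a) / y) := by
  apply le_antisymm
  · -- upper bound via Lipschitz
    have hlip : LipschitzOnWith (Real.toNNReal (1/y)) (horoPath y hy) (Set.Icc a b) := by
      apply LipschitzOnWith.of_dist_le_mul
      intro s _ t _
      rw [horoPath_dist]
      have h0 : (0:ℝ) ≤ |s - t| / (2*y) := by positivity
      have h1 := arsinh_le_self' h0
      have h2 : ↑(Real.toNNReal (1/y)) = (1/y : ℝ) :=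
        Real.coe_toNNReal _ (by positivity)
      rw [h2, Real.dist_eq]
      calc 2 * Real.arsinh (|s-t|/(2*y)) ≤ 2 * (|s-t|/(2*y)) := by linarith
        _ = 1/y * |s-t| := by field_simp
    have hid : eVariationOn id (Set.Icc a b) ≤ ENNReal.ofReal (b - a) := by
      have hm : MonotoneOn (id : ℝ → ℝ) Set.univ := fun x _ y _ h => h
      have := hm.eVariationOn_le (Set.mem_univ a) (Set.mem_univ b)
      simpa using this
    have hcomp := hlip.comp_eVariationOn_le (Set.mapsTo_id (Set.Icc a b))
    have : eVariationOn (horoPath y hy) (Set.Icc a b)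
        ≤ ↑(Real.toNNReal (1/y)) * eVariationOn id (Set.Icc a b) := hcomp
    calc eVariationOn (horoPath y hy) (Set.Icc a b)
        ≤ ↑(Real.toNNReal (1/y)) * eVariationOn id (Set.Icc a b) := this
      _ ≤ ENNReal.ofReal (1/y) * ENNReal.ofReal (b - a) := by
          rw [ENNReal.ofReal, Real.toNNReal]
          exact mul_le_mul_right hid _
      _ = ENNReal.ofReal ((b - a) / y) := by
          rw [← ENNReal.ofReal_mul (by positivity)]
          congr 1; field_simp
  · -- lower bound via equal partitions
    rcases eq_or_lt_of_le hab with rfl | hab'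
    · simp
    set c : ℝ := (b - a) / (2*y) with hc
    have hcpos : 0 < c := div_pos (sub_pos.2 hab') (by positivity)
    have key : ∀ n : ℕ, 1 ≤ n →
        ENNReal.ofReal ((n:ℝ) * (2 * Real.arsinh (c / n)))
          ≤ eVariationOn (horoPath y hy) (Set.Icc a b) := by
      intro n hn
      have hnpos : (0:ℝ) < n := by exact_mod_cast hn
      set δ : ℝ := (b - a) / n with hδ
      have hδpos : 0 < δ := div_pos (sub_pos.2 hab') hnpos
      set u : ℕ → ℝ := fun j => a + ((min j n : ℕ) : ℝ) * δ with hu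
      have hmono : Monotone u := by
        intro i j hij
        have h : ((min i n : ℕ):ℝ) ≤ ((min j n : ℕ):ℝ) :=
          Nat.cast_le.2 (min_le_min hij le_rfl)
        exact add_le_add_right (mul_le_mul_of_nonneg_right h hδpos.le) a
      have hmem : ∀ i, u i ∈ Set.Icc a b := by
        intro i
        have h0 : (0:ℝ) ≤ ((min i n : ℕ):ℝ) := Nat.cast_nonneg _
        have hk : ((min i n : ℕ):ℝ) ≤ n := Nat.cast_le.2 (min_le_right _ _)
        have hnδ : (n:ℝ) * δ = b - a := by rw [hδ]; field_simp
        constructor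
        · simp only [hu]; nlinarith
        · simp only [hu]; nlinarith
      have hsum := eVariationOn.sum_le (f := horoPath y hy) (n := n) hmono hmem
      have hterm : ∀ i ∈ Finset.range n,
          edist (horoPath y hy (u (i+1))) (horoPath y hy (u i))
            = ENNReal.ofReal (2 * Real.arsinh (c / n)) := by
        intro i hi
        rw [Finset.mem_range] at hi
        rw [edist_dist, horoPath_dist]
        have h1 : min (i+1) n = i+1 := min_eq_left hi
        have h2 : min i n = i := min_eq_left hi.le
        have hdiff : u (i+1) - u i = δ := by
          simp only [hu, h1, h2]; push_cast; ring
        rw [hdiff, abs_of_pos hδpos]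
        have : δ / (2*y) = c / n := by
          rw [hδ, hc, div_div, div_div, mul_comm]
        rw [this]
      rw [Finset.sum_congr rfl hterm, Finset.sum_const, Finset.card_range,
        nsmul_eq_mul] at hsum
      calc ENNReal.ofReal ((n:ℝ) * (2 * Real.arsinh (c / n)))
          = (n : ENNReal) * ENNReal.ofReal (2 * Real.arsinh (c / n)) := by
            rw [ENNReal.ofReal_mul (Nat.cast_nonneg n), ENNReal.ofReal_natCast]
        _ ≤ _ := hsum
    -- limit
    have hslope : Filter.Tendsto (fun x : ℝ => Real.arsinh x / x)
        (nhdsWithin 0 {(0:ℝ)}ᶜ) (nhds 1) := by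
      have h := Real.hasDerivAt_arsinh 0
      rw [hasDerivAt_iff_tendsto_slope] at h
      have h1 : ((Real.sqrt (1 + (0:ℝ) ^ 2))⁻¹ : ℝ) = 1 := by simp
      rw [h1] at h
      refine h.congr (fun x => ?_)
      simp [slope_def_field, Real.arsinh_zero, div_eq_inv_mul]
    have hxn : Filter.Tendsto (fun n : ℕ => c / n) Filter.atTop
        (nhdsWithin 0 {(0:ℝ)}ᶜ) := by
      apply tendsto_nhdsWithin_of_tendsto_nhds_of_eventually_within
      · exact tendsto_const_div_atTop_nhds_zero_nat c
      · filter_upwards [Filter.eventually_ge_atTop 1] with n hn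
        have hn0 : (0:ℝ) < n := by exact_mod_cast hn
        simp [Set.mem_compl_iff, div_eq_zero_iff, hcpos.ne', hn0.ne']
    have hlim : Filter.Tendsto (fun n : ℕ => (n:ℝ) * (2 * Real.arsinh (c / n)))
        Filter.atTop (nhds ((b - a)/y)) := by
      have h2 := (hslope.comp hxn).const_mul (2*c)
      have heq : ∀ᶠ n : ℕ in Filter.atTop,
          2*c * (Real.arsinh (c/n) / (c/n)) = (n:ℝ) * (2 * Real.arsinh (c/n)) := by
        filter_upwards [Filter.eventually_ge_atTop 1] with n hn
        have hn0 : (0:ℝ) < n := by exact_mod_cast hn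
        field_simp
      have h3 := h2.congr' heq
      have h4 : 2*c*1 = (b-a)/y := by rw [hc]; field_simp
      rwa [h4] at h3
    have h5 : Filter.Tendsto (fun n : ℕ => ENNReal.ofReal ((n:ℝ) * (2 * Real.arsinh (c / n))))
        Filter.atTop (nhds (ENNReal.ofReal ((b-a)/y))) :=
      ENNReal.tendsto_ofReal hlim
    apply le_of_tendsto h5
    filter_upwards [Filter.eventually_ge_atTop 1] with n hn using key n hn
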